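/- Let Δ = (Δ_1, …, Δ_ℓ) be a weak composition (a finite sequence of nonnegative integers) with Δ_1 > 0, and let Δ' be any coarsening of the flattening fl(Δ). Then there is exactly one allowable flat coarsening subset S ⊆ {1,…,ℓ−1} for Δ such that Θ(Δ,S) = Δ'. -/

import Mathlib

open scoped BigOperators

/-- NSym modeled as the free noncommutative ℚ-algebra on generators indexed by ℕ
(the generator `n` playing the role of `H_n` for `n ≥ 1`). -/
abbrev NSym : Type := FreeAlgebra ℚ ℕ

/-- The complete homogeneous noncommutative symmetric functions, extended to ℤ:
`H 0 = 1`, `H n = 0` for `n < 0`, and `H n` the `n`-th generator for `n ≥ 1`. -/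
noncomputable def H (n : ℤ) : NSym :=
  if n < 0 then 0 else if n = 0 then 1 else FreeAlgebra.ι ℚ n.toNat

/-- `DecFrom k r ν` : `ν_r ≥ ν_{r+1} ≥ … ≥ ν_k` (1-based indexing). -/
def DecFrom (k r : ℕ) (ν : ℕ → ℕ) : Prop :=
  ∀ i, r ≤ i → i < k → ν (i + 1) ≤ ν i

/-- `(p,q)` is a boundary cell of the partial GBPR diagram `D^{(r-1)}_{μ/ν}`. -/
def IsBoundary (k r : ℕ) (μ : ℕ → ℤ) (ν : ℕ → ℕ) (p q : ℕ) : Prop :=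
  r ≤ p ∧ p ≤ k ∧
    (if p = r then
      ν r + 1 ≤ q ∧ (q : ℤ) ≤ max ((ν r : ℤ) + 1) (max (μ r) (2 * (ν r : ℤ) - μ r))
    else
      ν p + 1 ≤ q ∧ q ≤ ν (p - 1) + 1)

/-- `(p,q)` is a tunnel cell of `D^{(r-1)}_{μ/ν}`. -/
def IsTunnel (k r : ℕ) (μ : ℕ → ℤ) (ν : ℕ → ℕ) (p q : ℕ) : Prop :=
  IsBoundary k r μ ν p q ∧ q = ν p + 1

/-- The set of boundary cells of `D^{(r-1)}_{μ/ν}` not tunnel cells. -/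
def IsN (k r : ℕ) (μ : ℕ → ℤ) (ν : ℕ → ℕ) (p q : ℕ) : Prop :=
  IsBoundary k r μ ν p q ∧ ¬ IsTunnel k r μ ν p q

/-- The tunnel hook `h(r,τ)` for a tunnel cell `τ = (p,q)` of `D^{(r-1)}_{μ/ν}`:
all boundary cells in rows `r` through `p`. -/
def hook (k r : ℕ) (μ : ℕ → ℤ) (ν : ℕ → ℕ) (p : ℕ) : Set (ℕ × ℕ) :=
  {c : ℕ × ℕ | IsBoundary k r μ ν c.1 c.2 ∧ c.1 ≤ p}

/-- The value `Δ(h(r,τ)) = (μ_r − ν_r) + (ν_r + 1 − q) + (p − r)` for `τ = (p,q)`. -/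
def hookDelta (μ : ℕ → ℤ) (ν : ℕ → ℕ) (r p q : ℕ) : ℤ :=
  (μ r - (ν r : ℤ)) + (((ν r : ℤ) + 1) - (q : ℤ)) + ((p : ℤ) - (r : ℤ))

/-- The update `ν ↦ ν^{(r)}`: `ν'_i = ν_{i-1} + 1` for `r < i ≤ p`, else `ν'_i = ν_i`. -/
def nuUpdate (ν : ℕ → ℕ) (r p : ℕ) : ℕ → ℕ := fun i =>
  if r < i ∧ i ≤ p then ν (i - 1) + 1 else ν i

/-- The sequence `ν^{(0)}, ν^{(1)}, …` of intermediate shapes of a tunnel hook covering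
with terminal rows `p 1, p 2, …`. -/
def nuSeq (ν₀ : ℕ → ℕ) (p : ℕ → ℕ) : ℕ → ℕ → ℕ
  | 0 => ν₀
  | r + 1 => nuUpdate (nuSeq ν₀ p r) (r + 1) (p (r + 1))

/-- A tunnel hook covering of `D_{μ/ν₀}` : for each `r = 1, …, k` a tunnel cell
`(p r, q r)` of `D^{(r-1)}_{μ/ν^{(r-1)}}` (values outside `1 ≤ r ≤ k` normalized to `0`). -/
structure THC (k : ℕ) (μ : ℕ → ℤ) (ν₀ : ℕ → ℕ) where
  p : ℕ → ℕ
  q : ℕ → ℕ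
  tunnel : ∀ r, 1 ≤ r → r ≤ k → IsTunnel k r μ (nuSeq ν₀ p (r - 1)) (p r) (q r)
  p_out : ∀ r, r = 0 ∨ k < r → p r = 0
  q_out : ∀ r, r = 0 ∨ k < r → q r = 0

/-- Row-ordered noncommutative determinant (Laplace expansion from the top row down). -/
noncomputable def ndet {k : ℕ} (A : Fin k → Fin k → NSym) : NSym :=
  ∑ σ : Equiv.Perm (Fin k),
    ((Equiv.Perm.sign σ : ℤ) • (List.ofFn fun i => A i (σ i)).prod)

/-- The immaculate function `I_μ = ndet (H_{μ_i + j − i})` (1-based `μ`). -/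
noncomputable def Imm (k : ℕ) (μ : ℕ → ℤ) : NSym :=
  ndet fun i j : Fin k => H (μ (i.1 + 1) + ((j.1 : ℤ) + 1) - ((i.1 : ℤ) + 1))

/-- The skew immaculate function `I_{μ/ν} = ndet (H_{(μ_i − i) − (ν_j − j)})`. -/
noncomputable def ImmSkew (k : ℕ) (μ ν : ℕ → ℤ) : NSym :=
  ndet fun i j : Fin k =>
    H ((μ (i.1 + 1) - ((i.1 : ℤ) + 1)) - (ν (j.1 + 1) - ((j.1 : ℤ) + 1)))

/-- The signed product `∏_{r=1}^{k} ε(h(r,τ_r)) H_{Δ(h(r,τ_r))}` attached to a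
tunnel hook covering, the product taken in the order `r = 1, …, k`. -/
noncomputable def thcTerm (k : ℕ) (μ : ℕ → ℤ) (ν₀ : ℕ → ℕ) (γ : THC k μ ν₀) : NSym :=
  (List.ofFn fun r : Fin k =>
    (-1 : NSym) ^ (γ.p (r.1 + 1) - (r.1 + 1)) *
      H (hookDelta μ (nuSeq ν₀ γ.p r.1) (r.1 + 1) (γ.p (r.1 + 1)) (γ.q (r.1 + 1)))).prod
/-- Two cells are adjacent iff their taxicab distance is 1. -/
def Adj (c d : ℕ × ℕ) : Prop :=
  ((c.1 : ℤ) - (d.1 : ℤ)).natAbs + ((c.2 : ℤ) - (d.2 : ℤ)).natAbs = 1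

/-- A set of cells is connected: any two of its cells are joined by a chain of
cells of the set in which consecutive cells are adjacent. -/
def ConnectedSet (C : Set (ℕ × ℕ)) : Prop :=
  ∀ c ∈ C, ∀ d ∈ C, ∃ l : List (ℕ × ℕ),
    l.head? = some c ∧ l.getLast? = some d ∧ (∀ x ∈ l, x ∈ C) ∧ l.Chain' Adj

/-- `m_r = #{ i < r : σ_i > σ_r }`. -/
def mcount {k : ℕ} (σ : Equiv.Perm (Fin k)) (r : Fin k) : ℕ :=
  (Finset.univ.filter fun i : Fin k => i < r ∧ σ r < σ i).card

/-- The set `{σ_{r+1}, …, σ_k}` of one-line (1-based) values of `σ` at positions `> r`. -/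
def onelineTail {k : ℕ} (σ : Equiv.Perm (Fin k)) (r : ℕ) : Finset ℕ :=
  (Finset.univ.filter fun i : Fin k => r < i.1 + 1).image fun i => (σ i).1 + 1

/-- `beta σ r t` : the `t`-th smallest element of `{σ_{r+1}, …, σ_k}`. -/
def beta {k : ℕ} (σ : Equiv.Perm (Fin k)) (r t : ℕ) : ℕ :=
  ((onelineTail σ r).sort (· ≤ ·)).getD (t - 1) 0

/-- The exponent `δ` in the sign of a linear permutation `π ∈ A_{k,m}`. -/
def lpInv {k m : ℕ} (π : Fin m ↪ Fin k) : ℕ :=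
  (Finset.univ.filter fun p : Fin m × Fin m => p.1 < p.2 ∧ π p.2 < π p.1).card +
  (Finset.univ.filter fun p : Fin m × Fin k => (∀ t, π t ≠ p.2) ∧ p.2 < π p.1).card

/-- `betaC π j` : the `j`-th smallest element of `{1,…,k} ∖ {π_1,…,π_m}` (1-based values). -/
def betaC {k m : ℕ} (π : Fin m ↪ Fin k) (j : ℕ) : ℕ :=
  (((Finset.univ.filter fun q : Fin k => ∀ t, π t ≠ q).image fun q => q.1 + 1).sort
    (· ≤ ·)).getD (j - 1) 0

/-- Coarsening `Θ(α,S)` of a sequence: replace the comma at each position in `S`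
(1-based; position `i` lies between parts `i` and `i+1`) by addition. -/
def theta {α : Type} [Add α] (S : Finset ℕ) : ℕ → List α → List α
  | _, [] => []
  | _, [a] => [a]
  | i, a :: b :: rest =>
      if i ∈ S then theta S (i + 1) ((a + b) :: rest)
      else a :: theta S (i + 1) (b :: rest)
  termination_by i l => l.length

noncomputable def Hlist (β : List ℤ) : NSym := (β.map H).prod

/-- The ribbon function `R_β = Σ_{γ ⪰ β} (−1)^{ℓ(β)−ℓ(γ)} H_γ`, with `R_β = 0`
whenever `β` has a part `≤ 0`. -/
noncomputable def Ribbon (β : List ℤ) : NSym :=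
  if ∀ x ∈ β, 0 < x then
    ∑ S ∈ (Finset.Icc 1 (β.length - 1)).powerset,
      (-1 : NSym) ^ (β.length - (theta S 1 β).length) * Hlist (theta S 1 β)
  else 0

section AuxUAFC

def thetaB : List Bool → List ℕ → List ℕ
  | [], l => l
  | _ :: _, [] => []
  | _ :: _, [a] => [a]
  | b :: bs, a :: c :: rest => if b then thetaB bs ((a + c) :: rest) else a :: thetaB bs (c :: rest)

def filtB (bs : List Bool) (t : List ℕ) : List Bool :=
  ((bs.zip t).filter (fun p => p.2 ≠ 0)).map Prod.fst

def bsOf (S : Finset ℕ) (n : ℕ) : List Bool :=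
  (List.range' 1 n).map fun j => decide (j ∈ S)

lemma theta_cons2 {S : Finset ℕ} (i : ℕ) (a b : ℕ) (rest : List ℕ) :
    theta S i (a :: b :: rest) =
      if i ∈ S then theta S (i + 1) ((a + b) :: rest)
      else a :: theta S (i + 1) (b :: rest) := by
  rw [theta]

lemma bridge (S : Finset ℕ) : ∀ (rest : List ℕ) (a i : ℕ),
    theta S i (a :: rest) = thetaB ((List.range' i rest.length).map fun j => decide (j ∈ S)) (a :: rest) := by
  intro rest
  induction rest with
  | nil => intro a i; rw [theta]; rfl
  | cons b r ih =>
      intro a i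
      rw [theta_cons2]
      simp only [List.length_cons, List.range'_succ, List.map_cons, thetaB]
      by_cases h : i ∈ S
      · simp [h, ih]
      · simp [h, ih]

lemma Lhead : ∀ (bs : List Bool) (x : ℕ) (rest : List ℕ),
    ∃ h t, thetaB bs (x :: rest) = h :: t ∧ x ≤ h := by
  intro bs
  induction bs with
  | nil => intro x rest; exact ⟨x, rest, rfl, le_refl x⟩
  | cons b bsr ih =>
      intro x rest
      cases rest with
      | nil => exact ⟨x, [], rfl, le_refl x⟩
      | cons c r =>
          cases b with
          | true =>
              obtain ⟨h, t, he, hle⟩ := ih (x + c) r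
              exact ⟨h, t, by simpa [thetaB] using he, le_trans (Nat.le_add_right x c) hle⟩
          | false =>
              obtain ⟨h, t, he, _⟩ := ih c r
              exact ⟨x, thetaB bsr (c :: r), by simp [thetaB], le_refl x⟩

lemma L_inj : ∀ (bs₁ : List Bool) (l : List ℕ) (bs₂ : List Bool),
    (∀ x ∈ l, x ≠ 0) → bs₁.length = l.length - 1 → bs₂.length = l.length - 1 →
    thetaB bs₁ l = thetaB bs₂ l → bs₁ = bs₂ := by
  intro bs₁
  induction bs₁ with
  | nil =>
      intro l bs₂ _ h1 h2 _
      simp only [List.length_nil] at h1 h2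
      have : bs₂.length = 0 := by omega
      exact (List.length_eq_zero_iff.mp this).symm
  | cons b₁ t₁ ih =>
      intro l bs₂ hpos h1 h2 heq
      match l, bs₂ with
      | [], _ => simp at h1
      | [a], _ => simp at h1
      | a :: c :: r, [] => simp at h2
      | a :: c :: r, b₂ :: t₂ =>
          have hc : c ≠ 0 := hpos c (by simp)
          have ha : a ≠ 0 := hpos a (by simp)
          cases b₁ with
          | true =>
              cases b₂ with
              | true =>
                  simp only [thetaB, if_true] at heq
                  have := ih ((a + c) :: r) t₂ (by
                    intro x hx
                    rcases List.mem_cons.mp hx with h | h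
                    · subst h; omega
                    · exact hpos x (by simp [h])) (by simp at h1 ⊢; omega)
                    (by simp at h2 ⊢; omega) heq
                  rw [this]
              | false =>
                  exfalso
                  simp only [thetaB, if_true, if_neg Bool.false_ne_true] at heq
                  obtain ⟨h, t, he, hle⟩ := Lhead t₁ (a + c) r
                  rw [he] at heq
                  have : h = a := (List.cons.injEq _ _ _ _ ▸ heq).1
                  omega
          | false =>
              cases b₂ with
              | true =>
                  exfalso
                  simp only [thetaB, if_true, if_neg Bool.false_ne_true] at heq
                  obtain ⟨h, t, he, hle⟩ := Lhead t₂ (a + c) r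
                  rw [he] at heq
                  have : a = h := (List.cons.injEq _ _ _ _ ▸ heq).1
                  omega
              | false =>
                  simp only [thetaB, if_neg Bool.false_ne_true] at heq
                  have heq' := (List.cons.injEq _ _ _ _ ▸ heq).2
                  have := ih (c :: r) t₂ (fun x hx => hpos x (by simp [List.mem_cons.mp hx]))
                    (by simp at h1 ⊢; omega) (by simp at h2 ⊢; omega) heq'
                  rw [this]

lemma L_flat : ∀ (bs : List Bool) (h : ℕ) (t : List ℕ),
    bs.length = t.length → (∀ p ∈ bs.zip t, p.2 = 0 → p.1 = true) →
    thetaB bs (h :: t) = thetaB (filtB bs t) (h :: t.filter (fun x => decide (x ≠ 0))) := by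
  intro bs
  induction bs with
  | nil =>
      intro h t hlen _
      simp only [List.length_nil] at hlen
      have : t = [] := List.length_eq_zero_iff.mp (by omega)
      subst this
      simp [filtB, thetaB]
  | cons b bsr ih =>
      intro h t hlen hforce
      match t with
      | [] => simp at hlen
      | c :: r =>
          have hlen' : bsr.length = r.length := by simpa using hlen
          have hforce' : ∀ p ∈ bsr.zip r, p.2 = 0 → p.1 = true := by
            intro p hp; exact hforce p (by simp [List.zip_cons_cons, hp])
          by_cases hc : c = 0
          · subst hc
            have hb : b = true := hforce (b, 0) (by simp [List.zip_cons_cons]) rfl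
            subst hb
            have : filtB (true :: bsr) (0 :: r) = filtB bsr r := by
              simp [filtB, List.zip_cons_cons]
            rw [this]
            simp only [thetaB, if_true, Nat.add_zero]
            rw [ih h r hlen' hforce']
            simp
          · have hfilt : filtB (b :: bsr) (c :: r) = b :: filtB bsr r := by
              simp [filtB, List.zip_cons_cons, hc]
            rw [hfilt]
            have hfc : (c :: r).filter (fun x => decide (x ≠ 0)) =
                c :: r.filter (fun x => decide (x ≠ 0)) := by simp [hc]
            rw [hfc]
            cases b with
            | true =>
                simp only [thetaB, if_true]
                exact ih (h + c) r hlen' hforce'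
            | false =>
                simp only [thetaB, if_neg Bool.false_ne_true]
                rw [ih c r hlen' hforce']

lemma filtB_length : ∀ (t : List ℕ) (bs : List Bool), bs.length = t.length →
    (filtB bs t).length = (t.filter (fun x => decide (x ≠ 0))).length := by
  intro t
  induction t with
  | nil => intro bs h; have : bs = [] := List.length_eq_zero_iff.mp (by simpa using h); simp [this, filtB]
  | cons c r ih =>
      intro bs h
      match bs with
      | [] => simp at h
      | b :: bsr =>
          have h' : bsr.length = r.length := by simpa using h
          by_cases hc : c = 0
          · subst hc
            have := ih bsr h'
            simp only [filtB, List.zip_cons_cons] at this ⊢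
            simpa using this
          · have := ih bsr h'
            simp only [filtB, List.zip_cons_cons] at this ⊢
            simp [hc]
            simpa using this

lemma L_inj2 : ∀ (t : List ℕ) (bs₁ bs₂ : List Bool),
    bs₁.length = t.length → bs₂.length = t.length →
    (∀ p ∈ bs₁.zip t, p.2 = 0 → p.1 = true) → (∀ p ∈ bs₂.zip t, p.2 = 0 → p.1 = true) →
    filtB bs₁ t = filtB bs₂ t → bs₁ = bs₂ := by
  intro t
  induction t with
  | nil =>
      intro bs₁ bs₂ h1 h2 _ _ _
      have e1 : bs₁ = [] := List.length_eq_zero_iff.mp (by simpa using h1)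
      have e2 : bs₂ = [] := List.length_eq_zero_iff.mp (by simpa using h2)
      rw [e1, e2]
  | cons c r ih =>
      intro bs₁ bs₂ h1 h2 hf1 hf2 heq
      match bs₁, bs₂ with
      | [], _ => simp at h1
      | _ :: _, [] => simp at h2
      | b₁ :: t₁, b₂ :: t₂ =>
          have h1' : t₁.length = r.length := by simpa using h1
          have h2' : t₂.length = r.length := by simpa using h2
          have hf1' : ∀ p ∈ t₁.zip r, p.2 = 0 → p.1 = true := by
            intro p hp; exact hf1 p (by simp [List.zip_cons_cons, hp])
          have hf2' : ∀ p ∈ t₂.zip r, p.2 = 0 → p.1 = true := by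
            intro p hp; exact hf2 p (by simp [List.zip_cons_cons, hp])
          by_cases hc : c = 0
          · subst hc
            have hb1 : b₁ = true := hf1 (b₁, 0) (by simp [List.zip_cons_cons]) rfl
            have hb2 : b₂ = true := hf2 (b₂, 0) (by simp [List.zip_cons_cons]) rfl
            have : filtB t₁ r = filtB t₂ r := by
              simpa [filtB, List.zip_cons_cons] using heq
            rw [hb1, hb2, ih t₁ t₂ h1' h2' hf1' hf2' this]
          · have : b₁ = b₂ ∧ filtB t₁ r = filtB t₂ r := by
              constructor
              · have := heq
                simp [filtB, List.zip_cons_cons, hc] at this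
                exact this.1
              · have := heq
                simp [filtB, List.zip_cons_cons, hc] at this
                simpa [filtB] using this.2
            rw [this.1, ih t₁ t₂ h1' h2' hf1' hf2' this.2]

lemma L_surj : ∀ (t : List ℕ) (cs : List Bool),
    cs.length = (t.filter (fun x => decide (x ≠ 0))).length →
    ∃ bs : List Bool, bs.length = t.length ∧ (∀ p ∈ bs.zip t, p.2 = 0 → p.1 = true) ∧
      filtB bs t = cs := by
  intro t
  induction t with
  | nil =>
      intro cs h
      simp only [List.filter_nil, List.length_nil] at h
      have : cs = [] := List.length_eq_zero_iff.mp h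
      subst this
      exact ⟨[], rfl, by simp, by simp [filtB]⟩
  | cons c r ih =>
      intro cs h
      by_cases hc : c = 0
      · subst hc
        obtain ⟨bs, hl, hf, he⟩ := ih cs (by simpa using h)
        refine ⟨true :: bs, by simp [hl], ?_, ?_⟩
        · intro p hp
          rcases List.mem_cons.mp (by simpa [List.zip_cons_cons] using hp) with h | h
          · subst h; intro; rfl
          · exact hf p h
        · simpa [filtB, List.zip_cons_cons] using he
      · match cs with
        | [] => simp [hc] at h
        | d :: cs' =>
            obtain ⟨bs, hl, hf, he⟩ := ih cs' (by simpa [hc] using h)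
            refine ⟨d :: bs, by simp [hl], ?_, ?_⟩
            · intro p hp
              rcases List.mem_cons.mp (by simpa [List.zip_cons_cons] using hp) with h | h
              · subst h; intro h0; exact absurd h0 hc
              · exact hf p h
            · simp [filtB, List.zip_cons_cons, hc]
              simpa [filtB] using he

lemma bsOf_length (S : Finset ℕ) (n : ℕ) : (bsOf S n).length = n := by
  simp [bsOf]

lemma bsOf_get (S : Finset ℕ) (n i : ℕ) (hi : i < n) :
    (bsOf S n)[i]'(by simp [bsOf_length, hi]) = decide ((i + 1) ∈ S) := by
  simp only [bsOf, List.getElem_map, List.getElem_range']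
  simp [Nat.add_comm]

lemma bsOf_inj {S₁ S₂ : Finset ℕ} {n : ℕ} (h1 : S₁ ⊆ Finset.Icc 1 n) (h2 : S₂ ⊆ Finset.Icc 1 n)
    (h : bsOf S₁ n = bsOf S₂ n) : S₁ = S₂ := by
  ext j
  by_cases hj : j ∈ Finset.Icc 1 n
  · have hj' : 1 ≤ j ∧ j ≤ n := Finset.mem_Icc.mp hj
    have hi : j - 1 < n := by omega
    have e1 := bsOf_get S₁ n (j - 1) hi
    have e2 := bsOf_get S₂ n (j - 1) hi
    have hjj : j - 1 + 1 = j := by omega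
    rw [hjj] at e1 e2
    simp only [h] at e1
    have hd : decide (j ∈ S₁) = decide (j ∈ S₂) := by rw [← e1, ← e2]
    exact decide_eq_decide.mp hd
  · constructor
    · intro hm; exact absurd (h1 hm) hj
    · intro hm; exact absurd (h2 hm) hj

lemma bsOf_recover (bs : List Bool) (n : ℕ) (h : bs.length = n) :
    bsOf ((Finset.Icc 1 n).filter fun j => bs.getD (j - 1) false) n = bs := by
  apply List.ext_getElem (by simp [bsOf_length, h])
  intro i hi hib
  have hin : i < n := by simpa [bsOf_length] using hi
  rw [bsOf_get _ n i hin]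
  have hg : bs.getD i false = bs[i] := List.getD_eq_getElem bs false hib
  have hmem : (i + 1 ∈ (Finset.Icc 1 n).filter fun j => bs.getD (j - 1) false) ↔ bs[i] = true := by
    rw [Finset.mem_filter, Finset.mem_Icc]
    constructor
    · rintro ⟨-, hb⟩
      rw [Nat.add_sub_cancel, hg] at hb
      exact hb
    · intro hb
      refine ⟨⟨by omega, by omega⟩, ?_⟩
      rw [Nat.add_sub_cancel, hg]
      exact hb
  by_cases hm : i + 1 ∈ (Finset.Icc 1 n).filter fun j => bs.getD (j - 1) false
  · rw [decide_eq_true hm]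
    exact (hmem.mp hm).symm
  · rw [decide_eq_false hm]
    cases hbi : bs[i] with
    | false => rfl
    | true => exact absurd (hmem.mpr hbi) hm

end AuxUAFC

/-- **Lemma (unique allowable flat coarsening subset).** Let `Δ` be a weak composition
with `Δ_1 > 0` and let `Δ'` be any coarsening of the flattening `fl(Δ)` (the strong
composition obtained by deleting the zero parts of `Δ`).  Then there is exactly one
allowable flat coarsening subset `S ⊆ {1,…,ℓ−1}` for `Δ` (i.e. a subset containing
`i − 1` whenever `Δ_i = 0`) such that `Θ(Δ,S) = Δ'`. -/
theorem unique_allowable_flat_coarsening (Δ : List ℕ) (hne : Δ ≠ [])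
    (h1 : 0 < Δ.head hne) (Δ' : List ℕ)
    (hc : ∃ S' : Finset ℕ,
      S' ⊆ Finset.Icc 1 ((Δ.filter fun x => x ≠ 0).length - 1) ∧
      theta S' 1 (Δ.filter fun x => x ≠ 0) = Δ') :
    ∃! S : Finset ℕ,
      S ⊆ Finset.Icc 1 (Δ.length - 1) ∧
      (∀ i, 2 ≤ i → i ≤ Δ.length → Δ.getD (i - 1) 1 = 0 → i - 1 ∈ S) ∧
      theta S 1 Δ = Δ' := by
  obtain ⟨h0, t⟩ : ∃ h0 t, Δ = h0 :: t := by
    cases Δ with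
    | nil => exact absurd rfl hne
    | cons a l => exact ⟨a, l, rfl⟩
  obtain ⟨t, rfl⟩ := t
  have hh0 : h0 ≠ 0 := by
    have : 0 < h0 := h1
    omega
  set n := t.length with hn
  set tf := t.filter (fun x => decide (x ≠ 0)) with htf
  have hF : (h0 :: t).filter (fun x => decide (x ≠ 0)) = h0 :: tf := by
    rw [List.filter_cons_of_pos (by simpa using hh0)]
  obtain ⟨S', _, hS'⟩ := hc
  set m' := tf.length with hm'
  set cs := bsOf S' m' with hcs
  have hcsl : cs.length = m' := bsOf_length S' m'
  have hΔ' : thetaB cs (h0 :: tf) = Δ' := by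
    rw [← hS']
    show thetaB cs (h0 :: tf) = theta S' 1 ((h0 :: t).filter fun x => decide (x ≠ 0))
    rw [hF, bridge S' tf h0 1]
    rfl
  obtain ⟨bs, hbl, hbf, hbe⟩ := L_surj t cs hcsl
  set S : Finset ℕ := (Finset.Icc 1 n).filter (fun j => bs.getD (j - 1) false) with hS
  have hrec : bsOf S n = bs := bsOf_recover bs n hbl
  have hSsub : S ⊆ Finset.Icc 1 n := Finset.filter_subset _ _
  have hlen1 : (h0 :: t).length - 1 = n := by simp [hn]
  -- main theta computation for any allowable S₁ with bsOf S₁ n = some forced bs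
  have thetacomp : ∀ S₁ : Finset ℕ, theta S₁ 1 (h0 :: t) = thetaB (bsOf S₁ n) (h0 :: t) := by
    intro S₁
    rw [bridge S₁ t h0 1]
    rfl
  have forced_of_allow : ∀ S₁ : Finset ℕ,
      (∀ i, 2 ≤ i → i ≤ (h0 :: t).length → (h0 :: t).getD (i - 1) 1 = 0 → i - 1 ∈ S₁) →
      ∀ p ∈ (bsOf S₁ n).zip t, p.2 = 0 → p.1 = true := by
    intro S₁ hall p hp hp2
    obtain ⟨k, hk, hpk⟩ := List.mem_iff_getElem.mp hp
    have hkn : k < n := by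
      have := hk
      simp only [List.length_zip, bsOf_length] at this
      omega
    rw [List.getElem_zip] at hpk
    have hp1 : p.1 = decide ((k + 1) ∈ S₁) := by
      rw [← hpk]
      exact bsOf_get S₁ n k hkn
    have hp2' : t[k]'(by omega) = 0 := by rw [← hpk] at hp2; exact hp2
    have hmemS : k + 1 ∈ S₁ := by
      have := hall (k + 2) (by omega) (by simp; omega) (by
        have : (h0 :: t).getD (k + 2 - 1) 1 = t.getD k 1 := by
          show (h0 :: t).getD (k + 1) 1 = t.getD k 1
          simp [List.getD]
        rw [this, List.getD_eq_getElem t 1 (by omega)]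
        exact hp2')
      simpa using this
    rw [hp1, decide_eq_true hmemS]
  refine ⟨S, ⟨?_, ?_, ?_⟩, ?_⟩
  · rw [hlen1]; exact hSsub
  · intro i h2i hil hz
    have hil' : i ≤ n + 1 := by simpa using hil
    have hidx : i - 2 < n := by omega
    have htk : t[i - 2]'(by omega) = 0 := by
      have e : (h0 :: t).getD (i - 1) 1 = t.getD (i - 2) 1 := by
        have : i - 1 = (i - 2) + 1 := by omega
        rw [this]
        simp [List.getD]
      rw [e, List.getD_eq_getElem t 1 (by omega)] at hz
      exact hz
    have hbst : bs[i - 2]'(by omega) = true := by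
      apply hbf (bs[i - 2]'(by omega), t[i - 2]'(by omega))
      · exact List.mem_iff_getElem.mpr ⟨i - 2, by simp [List.length_zip, hbl]; omega,
          List.getElem_zip⟩
      · exact htk
    rw [hS]
    refine Finset.mem_filter.mpr ⟨Finset.mem_Icc.mpr ⟨by omega, by omega⟩, ?_⟩
    have : i - 1 - 1 = i - 2 := by omega
    rw [this, List.getD_eq_getElem bs false (by omega)]
    exact hbst
  · rw [thetacomp S, hrec, L_flat bs h0 t hbl hbf, hbe, ← htf]
    exact hΔ'
  · rintro S₁ ⟨hsub₁, hall₁, hth₁⟩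
    set bs₁ := bsOf S₁ n with hbs₁
    have hf₁ : ∀ p ∈ bs₁.zip t, p.2 = 0 → p.1 = true := forced_of_allow S₁ hall₁
    have hth₁B : thetaB bs₁ (h0 :: t) = Δ' := by rw [← thetacomp S₁]; exact hth₁
    have hflat₁ : thetaB (filtB bs₁ t) (h0 :: tf) = Δ' := by
      rw [← L_flat bs₁ h0 t (bsOf_length S₁ n) hf₁]
      exact hth₁B
    have hpos : ∀ x ∈ h0 :: tf, x ≠ 0 := by
      intro x hx
      rcases List.mem_cons.mp hx with h | h
      · subst h; exact hh0
      · exact of_decide_eq_true (List.mem_filter.mp h).2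
    have hlf : (filtB bs₁ t).length = (h0 :: tf).length - 1 := by
      rw [filtB_length t bs₁ (bsOf_length S₁ n), ← htf]
      simp
    have hcsf : cs.length = (h0 :: tf).length - 1 := by rw [hcsl]; simp [hm']
    have heqf : filtB bs₁ t = cs := by
      apply L_inj (filtB bs₁ t) (h0 :: tf) cs hpos hlf hcsf
      rw [hflat₁, hΔ']
    have hbs_eq : bs₁ = bs := by
      apply L_inj2 t bs₁ bs (bsOf_length S₁ n) hbl hf₁ hbf
      rw [heqf, ← hbe]
    apply bsOf_inj (n := n) (by rw [hlen1] at hsub₁; exact hsub₁) hSsub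
    rw [← hbs₁, hbs_eq, hrec]
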